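/- If the 2-cocycle α satisfies the universal regularity condition on W (f(x,s) = 1 for all regular s and all x ∈ W), then W_reg is closed under conjugation by G: for all x ∈ G and s ∈ W_reg, xsx^{-1} ∈ W_reg. -/
import Mathlib


/-- A crystalline graded ring `A = K ◊_{σ,α} G` over a field `K`: `K` embeds in `A`
via `ι`, the `u_g` are units of `A`, `σ : G → Aut(K)` (a group morphism, since `K`
is commutative `σ_{gh} = σ_g σ_h`), `α : G × G → K^×` with `u_g r = σ_g(r) u_g`,
`u_g u_h = α(g,h) u_{gh}`, `α(g,e) = α(e,g) = 1`, the 2-cocycle relation, and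
`α(g,g⁻¹) = σ_g(α(g⁻¹,g))`; `A = ⊕_{g} K u_g` via `basis`. -/
structure CrysField (G K A : Type*) [Group G] [Field K] [Ring A] where
  ι : K →+* A
  inj : Function.Injective ι
  u : G → Aˣ
  σ : G →* RingAut K
  α : G → G → Kˣ
  u_one : u 1 = 1
  comm : ∀ (g : G) (r : K), (u g : A) * ι r = ι (σ g r) * (u g : A)
  mul_u : ∀ g h : G, (u g : A) * (u h : A) = ι (α g h) * (u (g * h) : A)
  α_one_left : ∀ g : G, α 1 g = 1
  α_one_right : ∀ g : G, α g 1 = 1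
  cocycle : ∀ g h t : G, (α g h : K) * α (g * h) t = σ g (α h t) * α g (h * t)
  α_inv : ∀ g : G, (α g g⁻¹ : K) = σ g (α g⁻¹ g)
  basis : Function.Bijective (fun f : G →₀ K => f.sum fun g r => ι r * (u g : A))

namespace CrysField
variable {G K A : Type*} [Group G] [Field K] [Ring A] (P : CrysField G K A)

/-- The embedding of `Kˣ` into `Aˣ` induced by `ι`. -/
def S : Kˣ →* Aˣ := Units.map P.ι.toMonoidHom

lemma S_coe (r : Kˣ) : ((P.S r : Aˣ) : A) = P.ι r := rfl

lemma mulU (g h : G) : P.u g * P.u h = P.S (P.α g h) * P.u (g * h) := by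
  apply Units.ext
  simpa [S_coe] using P.mul_u g h

lemma commS (g : G) (hg : P.σ g = 1) (r : Kˣ) : Commute (P.u g) (P.S r) := by
  apply Units.ext
  have := P.comm g r
  rw [hg] at this
  simpa [S_coe] using this

end CrysField

/-- If the 2-cocycle `α` satisfies the universal regularity condition on
`W = Ker σ` (`f(x,s) = 1` for all `α`-regular `s ∈ W` and all `x ∈ W`, where
`f(x,g) = α(x,g)/α(xgx⁻¹,x)`, and `s ∈ W` is regular iff `α(k,s) = α(s,k)` for
all `k ∈ C_W(s)`), then `W_reg = {g ∈ W : f(x,g) = 1 ∀ x ∈ W}` is closed under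
conjugation by `G`: for all `x ∈ G` and `s ∈ W_reg`, `xsx⁻¹ ∈ W_reg`. -/
theorem Wreg_conj_stable {G K A : Type*} [Group G] [Fintype G] [Field K] [Ring A]
    (P : CrysField G K A)
    (hURC : ∀ s : G, P.σ s = 1 →
      (∀ k : G, P.σ k = 1 → k * s = s * k → (P.α k s : K) = P.α s k) →
      ∀ x : G, P.σ x = 1 → (P.α x s : K) = P.α (x * s * x⁻¹) x)
    (x s : G)
    (hs : P.σ s = 1 ∧ ∀ k : G, P.σ k = 1 →
      (P.α k s : K) = P.α (k * s * k⁻¹) k) :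
    P.σ (x * s * x⁻¹) = 1 ∧ ∀ k : G, P.σ k = 1 →
      (P.α k (x * s * x⁻¹) : K) = P.α (k * (x * s * x⁻¹) * k⁻¹) k := by
  obtain ⟨hσs, hreg⟩ := hs
  have hσt : P.σ (x * s * x⁻¹) = 1 := by
    simp [map_mul, map_inv, hσs]
  refine ⟨hσt, ?_⟩
  -- conjugation formula in `Aˣ`
  have conj : ∀ g : G, P.u x * P.u g * (P.u x)⁻¹ =
      P.S (P.α x g) * (P.S (P.α (x*g*x⁻¹) x))⁻¹ * P.u (x*g*x⁻¹) := by
    intro g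
    have h2 := P.mulU (x*g*x⁻¹) x
    rw [show x*g*x⁻¹*x = x*g by group] at h2
    have h3 : P.u (x*g) = (P.S (P.α (x*g*x⁻¹) x))⁻¹ * (P.u (x*g*x⁻¹) * P.u x) := by
      rw [h2, inv_mul_cancel_left]
    rw [P.mulU x g, h3]
    group
  -- `t := x s x⁻¹` is regular
  have key : ∀ k : G, P.σ k = 1 → k * (x*s*x⁻¹) = (x*s*x⁻¹) * k →
      (P.α k (x*s*x⁻¹) : K) = P.α (x*s*x⁻¹) k := by
    intro k hk hcomm
    set t := x*s*x⁻¹ with ht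
    set w := x⁻¹*k*x with hw
    have hσw : P.σ w = 1 := by
      simp [hw, map_mul, map_inv, hk]
    have hws : w * s = s * w := by
      have h1 : w * s = x⁻¹ * (k * t) * x := by rw [hw, ht]; group
      have h2 : s * w = x⁻¹ * (t * k) * x := by rw [hw, ht]; group
      rw [h1, hcomm, ← h2]
    have hαws : P.α w s = P.α s w := by
      apply Units.ext
      have h := hreg w hσw
      rwa [show w * s * w⁻¹ = s by rw [hws]; group] at h
    have hUws : P.u w * P.u s = P.u s * P.u w := by
      rw [P.mulU, P.mulU, hαws, hws]
    set z := P.S (P.α x w) * (P.S (P.α (x*w*x⁻¹) x))⁻¹ with hz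
    set z' := P.S (P.α x s) * (P.S (P.α t x))⁻¹ with hz'
    have hconj1 : P.u x * P.u w * (P.u x)⁻¹ = z * P.u k := by
      have h := conj w
      rw [show x*w*x⁻¹ = k by rw [hw]; group] at h
      rw [hz, show x*w*x⁻¹ = k by rw [hw]; group]
      exact h
    have hconj2 : P.u x * P.u s * (P.u x)⁻¹ = z' * P.u t := by
      rw [hz', ht]; exact conj s
    -- commuting facts
    have hkk : x*w*x⁻¹ = k := by rw [hw]; group
    have hCzk : Commute (P.u k) z := by
      rw [hz, hkk]
      exact ((P.commS k hk _).mul_right (P.commS k hk _).inv_right)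
    have hCz'k : Commute (P.u k) z' := by
      rw [hz']
      exact ((P.commS k hk _).mul_right (P.commS k hk _).inv_right)
    have hσt' : P.σ t = 1 := hσt
    have hCzt : Commute (P.u t) z := by
      rw [hz, hkk]
      exact ((P.commS t hσt' _).mul_right (P.commS t hσt' _).inv_right)
    have hCzz' : Commute z z' := by
      rw [hz, hz', hkk]
      exact (((Commute.all _ _).map P.S).mul_right ((Commute.all _ _).map P.S).inv_right).mul_left
        ((((Commute.all _ _).map P.S).mul_right ((Commute.all _ _).map P.S).inv_right).inv_left)
    -- conjugate the commutation `u w * u s = u s * u w`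
    have hcc : (z * P.u k) * (z' * P.u t) = (z' * P.u t) * (z * P.u k) := by
      rw [← hconj1, ← hconj2]
      calc P.u x * P.u w * (P.u x)⁻¹ * (P.u x * P.u s * (P.u x)⁻¹)
          = P.u x * (P.u w * P.u s) * (P.u x)⁻¹ := by group
        _ = P.u x * (P.u s * P.u w) * (P.u x)⁻¹ := by rw [hUws]
        _ = P.u x * P.u s * (P.u x)⁻¹ * (P.u x * P.u w * (P.u x)⁻¹) := by group
    have hkt : P.u k * P.u t = P.u t * P.u k := by
      have e1 : (z * P.u k) * (z' * P.u t) = (z * z') * (P.u k * P.u t) :=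
        (Commute.mul_mul_mul_comm hCz'k.symm z (P.u t)).symm
      have e2 : (z' * P.u t) * (z * P.u k) = (z * z') * (P.u t * P.u k) := by
        rw [Commute.mul_mul_mul_comm hCzt z' (P.u k), hCzz'.symm.eq]
      rw [e1, e2] at hcc
      exact mul_left_cancel hcc
    have hfin : P.S (P.α k t) = P.S (P.α t k) := by
      have := hkt
      rw [P.mulU, P.mulU, hcomm] at this
      exact mul_right_cancel this
    have h2 := congrArg Units.val hfin
    rw [P.S_coe, P.S_coe] at h2
    exact P.inj h2
  intro k hk
  exact hURC (x*s*x⁻¹) hσt key k hk
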